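/- Let G be a countable abelian group and H a bounded servant (pure) subgroup of G. Then H is a direct summand of G. -/

import Mathlib

universe u

/-- Key lemma (Kulikov): a pure subgroup bounded by `n` of any abelian group is a
direct summand. Proved by strong induction on `n`. -/
lemma key_pure_bounded_summand : ∀ (n : ℕ), 0 < n →
    ∀ (G : Type u) [AddCommGroup G] (H : AddSubgroup G),
    (∀ h ∈ H, n • h = 0) →
    (∀ (m : ℕ) (a : G), a ∈ H → (∃ x : G, m • x = a) → ∃ y ∈ H, m • y = a) →
    ∃ K : AddSubgroup G, IsCompl H K := by
  intro n
  induction n using Nat.strong_induction_on with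
  | _ n IH =>
  intro hn G _ H hbound hpure
  by_cases hn1 : n = 1
  · subst hn1
    have hH : H = ⊥ := by
      rw [eq_bot_iff]; intro h hh
      have := hbound h hh
      simpa using this
    exact ⟨⊤, hH ▸ isCompl_bot_top⟩
  · -- n composite-or-prime, pick prime factor p, write n = p * m
    set p := n.minFac with hpdef
    have hpprime : p.Prime := Nat.minFac_prime hn1
    obtain ⟨m, hm⟩ : p ∣ n := Nat.minFac_dvd n
    have hmpos : 0 < m := by
      rcases Nat.eq_zero_or_pos m with rfl | h
      · rw [mul_zero] at hm; omega
      · exact h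
    have hmlt : m < n := by
      have := hpprime.two_le
      calc m = 1 * m := (one_mul m).symm
        _ < p * m := by
          exact (Nat.mul_lt_mul_right hmpos).mpr (by have := hpprime.two_le; omega)
        _ = n := hm.symm
    -- the multiplication-by-p homomorphism
    set f : G →+ G := AddMonoidHom.mk' (fun x => p • x) (fun a b => smul_add p a b) with hfdef
    have hf : ∀ x : G, f x = p • x := fun x => rfl
    set P : AddSubgroup G := f.range with hPdef
    set HP : AddSubgroup P := (H.map f).addSubgroupOf P with hHPdef
    have memHP : ∀ (x : P), x ∈ HP ↔ ∃ h ∈ H, p • h = (x : G) := by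
      intro x
      rw [hHPdef, AddSubgroup.mem_addSubgroupOf]
      constructor
      · rintro ⟨h, hh, hx⟩; exact ⟨h, hh, hx⟩
      · rintro ⟨h, hh, hx⟩; exact ⟨h, hh, hx⟩
    -- IH hypotheses for HP inside P
    have hboundHP : ∀ x ∈ HP, m • x = 0 := by
      intro x hx
      obtain ⟨h, hh, hph⟩ := (memHP x).mp hx
      apply Subtype.ext
      have : (m • x : P) = (m • (x : G) : G) := rfl
      rw [this, ← hph, smul_smul, mul_comm m p, ← hm]
      simpa using hbound h hh
    have hpureHP : ∀ (k : ℕ) (a : P), a ∈ HP → (∃ x : P, k • x = a) → ∃ y ∈ HP, k • y = a := by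
      intro k a ha hex
      obtain ⟨h, hh, hph⟩ := (memHP a).mp ha
      have haH : (a : G) ∈ H := by rw [← hph]; exact AddSubgroup.nsmul_mem H hh p
      obtain ⟨x, hx⟩ := hex
      obtain ⟨g, hg⟩ := x.2
      have hdvd : ∃ w : G, (k * p) • w = (a : G) := by
        refine ⟨g, ?_⟩
        have hxval : k • (x : G) = (a : G) := congrArg Subtype.val hx
        rw [mul_smul, show p • g = (x:G) from hg]
        exact hxval
      obtain ⟨h', hh', hkh'⟩ := hpure (k * p) (a : G) haH hdvd
      refine ⟨⟨p • h', ⟨h', rfl⟩⟩, ?_, ?_⟩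
      · rw [memHP]; exact ⟨h', hh', rfl⟩
      · apply Subtype.ext
        have : (k • (⟨p • h', ⟨h', rfl⟩⟩ : P) : P) = (k • (p • h') : G) := rfl
        rw [this, smul_smul, hkh']
    obtain ⟨K', hK'⟩ := IH m hmlt hmpos P HP hboundHP hpureHP
    set L : AddSubgroup G := K'.map P.subtype with hLdef
    -- (ii) H and L are disjoint (uses purity at p)
    have hHL : Disjoint H L := by
      rw [AddSubgroup.disjoint_def]
      intro x hxH hxL
      obtain ⟨z, hzK', hzx⟩ := hxL
      have hxP : x ∈ P := by rw [← hzx]; exact z.2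
      obtain ⟨g, hg⟩ := hxP
      obtain ⟨h', hh', hph'⟩ := hpure p x hxH ⟨g, hg⟩
      have hxHP : (⟨x, ⟨g, hg⟩⟩ : P) ∈ HP := by
        rw [memHP]; exact ⟨h', hh', hph'⟩
      have hxK' : (⟨x, ⟨g, hg⟩⟩ : P) ∈ K' := by
        have : z = (⟨x, ⟨g, hg⟩⟩ : P) := Subtype.ext hzx
        rwa [← this]
      have := (AddSubgroup.disjoint_def.mp hK'.disjoint) hxHP hxK'
      have : ((⟨x, ⟨g, hg⟩⟩ : P) : G) = 0 := by rw [this]; rfl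
      simpa using this
    -- (i) decomposition of P
    have hdecomp : ∀ x ∈ P, ∃ h ∈ H, x - p • h ∈ L := by
      intro x hxP
      have : (⟨x, hxP⟩ : P) ∈ HP ⊔ K' := by
        rw [codisjoint_iff.mp hK'.codisjoint]; trivial
      obtain ⟨y, hy, z, hz, hyz⟩ := AddSubgroup.mem_sup.mp this
      obtain ⟨h, hh, hph⟩ := (memHP y).mp hy
      refine ⟨h, hh, ?_⟩
      have hval : (y : G) + (z : G) = x := by
        have := congrArg (Subtype.val) hyz; simpa using this
      have : x - p • h = (z : G) := by rw [hph, ← hval]; abel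
      rw [this]
      exact ⟨z, hz, rfl⟩
    -- pass to the quotient Q = G / L
    let Q := G ⧸ L
    let mk : G →+ Q := QuotientAddGroup.mk' L
    have hker : ∀ x : G, mk x = 0 ↔ x ∈ L := by
      intro x; exact QuotientAddGroup.eq_zero_iff x
    set Hb : AddSubgroup Q := H.map mk with hHbdef
    have hmksurj : Function.Surjective mk := QuotientAddGroup.mk'_surjective L
    -- (iii) p • Q ⊆ p • Hb, concretely:
    have hdiv : ∀ q : Q, ∃ h ∈ H, p • q = p • (mk h) := by
      intro q
      obtain ⟨g, rfl⟩ := hmksurj q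
      have hpg : p • g ∈ P := ⟨g, rfl⟩
      obtain ⟨h, hh, hL⟩ := hdecomp (p • g) hpg
      refine ⟨h, hh, ?_⟩
      have h1 : mk (p • g - p • h) = 0 := (hker _).mpr hL
      have h2 : mk (p • g) = mk (p • h) := by
        rw [map_sub] at h1; linear_combination (norm := abel1) h1
      rw [← map_nsmul, ← map_nsmul, h2]
    -- Zorn: maximal Kb disjoint from Hb
    set S : Set (AddSubgroup Q) := {K | Disjoint Hb K} with hSdef
    have hchain : ∀ c ⊆ S, IsChain (· ≤ ·) c → ∀ y ∈ c, ∃ ub ∈ S, ∀ z ∈ c, z ≤ ub := by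
      intro c hcS hchain y hyc
      haveI : Nonempty c := ⟨⟨y, hyc⟩⟩
      have hdir : Directed (· ≤ ·) (fun K : c => (K : AddSubgroup Q)) := by
        intro a b
        rcases hchain.total a.2 b.2 with h | h
        · exact ⟨b, h, le_refl _⟩
        · exact ⟨a, le_refl _, h⟩
      refine ⟨⨆ K : c, (K : AddSubgroup Q), ?_, ?_⟩
      · rw [hSdef, Set.mem_setOf_eq, AddSubgroup.disjoint_def]
        intro x hxH hxU
        obtain ⟨K, hxK⟩ := (AddSubgroup.mem_iSup_of_directed hdir).mp hxU
        exact (AddSubgroup.disjoint_def.mp (hcS K.2)) hxH hxK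
      · intro z hz
        exact le_iSup (fun K : c => (K : AddSubgroup Q)) ⟨z, hz⟩
    obtain ⟨Kb, -, hmax⟩ := zorn_le_nonempty₀ S hchain ⊥
      (by rw [hSdef, Set.mem_setOf_eq]; exact disjoint_bot_right)
    have hKbS : Disjoint Hb Kb := hmax.1
    -- Kb is a complement of Hb in Q
    have hcod : ∀ q : Q, q ∈ Hb ⊔ Kb := by
      by_contra hc
      push_neg at hc
      obtain ⟨q, hq⟩ := hc
      obtain ⟨h, hh, hph⟩ := hdiv q
      set z := q - mk h with hzdef
      have hpz : p • z = 0 := by rw [hzdef, smul_sub, hph]; abel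
      have hmkh : mk h ∈ Hb ⊔ Kb := AddSubgroup.mem_sup_left ⟨h, hh, rfl⟩
      have hzn : z ∉ Hb ⊔ Kb := by
        intro hz
        exact hq (by
          have : q = z + mk h := by rw [hzdef]; abel
          rw [this]; exact AddSubgroup.add_mem _ hz hmkh)
      have hznK : z ∉ Kb := fun h' => hzn (AddSubgroup.mem_sup_right h')
      set Kb' := Kb ⊔ AddSubgroup.closure {z} with hKb'def
      have hzKb' : z ∈ Kb' := AddSubgroup.mem_sup_right (AddSubgroup.subset_closure rfl)
      have hlt : Kb < Kb' := lt_of_le_of_ne le_sup_left (by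
        intro he; exact hznK (he ▸ hzKb'))
      have hnd : ¬ Disjoint Hb Kb' := by
        intro hd
        exact (not_le_of_gt hlt) (hmax.2 hd hlt.le)
      rw [AddSubgroup.disjoint_def] at hnd
      push_neg at hnd
      obtain ⟨x, hxH, hxK', hx0⟩ := hnd
      obtain ⟨k, hk, w, hw, hkw⟩ := AddSubgroup.mem_sup.mp hxK'
      obtain ⟨t, ht⟩ := AddSubgroup.mem_closure_singleton.mp hw
      by_cases hpt : (p : ℤ) ∣ t
      · obtain ⟨s, rfl⟩ := hpt
        have hw0 : w = 0 := by
          rw [← ht, mul_comm, mul_smul]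
          have : (p : ℤ) • z = 0 := by rw [natCast_zsmul, hpz]
          rw [this, smul_zero]
        rw [hw0, add_zero] at hkw
        subst hkw
        exact hx0 ((AddSubgroup.disjoint_def.mp hKbS) hxH hk)
      · -- p coprime to t
        have hcop : IsCoprime (p : ℤ) t := by
          rw [Int.isCoprime_iff_gcd_eq_one]
          have hnd : ¬ p ∣ t.natAbs := by
            intro hd
            apply hpt
            have : ((p:ℤ)).natAbs ∣ t.natAbs := by simpa using hd
            exact Int.natAbs_dvd_natAbs.mp this
          have := (hpprime.coprime_iff_not_dvd).mpr hnd
          simpa [Int.gcd] using this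
        obtain ⟨a, b, hab⟩ := hcop
        have hz1 : z = b • (t • z) := by
          have h1 : (a * p + b * t) • z = z := by rw [hab, one_zsmul]
          have h2 : (a * (p:ℤ)) • z = 0 := by
            rw [mul_smul, natCast_zsmul, hpz, smul_zero]
          rw [add_smul, h2, zero_add, mul_smul] at h1
          exact h1.symm
        apply hzn
        have hxsup : x ∈ Hb ⊔ Kb := AddSubgroup.mem_sup_left hxH
        have hksup : k ∈ Hb ⊔ Kb := AddSubgroup.mem_sup_right hk
        have htz : t • z = x - k := by rw [ht, ← hkw]; abel
        rw [hz1, htz]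
        exact AddSubgroup.zsmul_mem _ (AddSubgroup.sub_mem _ hxsup hksup) b
    -- pull back to G
    refine ⟨Kb.comap mk, ?_, ?_⟩
    · rw [AddSubgroup.disjoint_def]
      intro x hxH hxK
      have h1 : mk x ∈ Hb := ⟨x, hxH, rfl⟩
      have h2 : mk x ∈ Kb := hxK
      have h3 : mk x = 0 := (AddSubgroup.disjoint_def.mp hKbS) h1 h2
      have h4 : x ∈ L := (hker x).mp h3
      exact (AddSubgroup.disjoint_def.mp hHL) hxH h4
    · rw [codisjoint_iff, eq_top_iff]
      intro g _
      obtain ⟨y, hy, k, hk, hyk⟩ := AddSubgroup.mem_sup.mp (hcod (mk g))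
      obtain ⟨h, hh, rfl⟩ := hy
      have hgk : g - h ∈ Kb.comap mk := by
        have : mk (g - h) = k := by rw [map_sub]; linear_combination (norm := abel1) hyk.symm
        rw [AddSubgroup.mem_comap, this]; exact hk
      rw [AddSubgroup.mem_sup]
      exact ⟨h, hh, g - h, hgk, by abel⟩

/-- Prüfer–Kulikov: a bounded pure (servant) subgroup of a countable abelian group
is a direct summand. -/
theorem bounded_pure_subgroup_is_direct_summand
    (G : Type*) [AddCommGroup G] [Countable G] (H : AddSubgroup G)
    (hbounded : ∃ n : ℕ, 0 < n ∧ ∀ h ∈ H, n • h = 0)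
    (hpure : ∀ (n : ℕ) (a : G), a ∈ H → (∃ x : G, n • x = a) → ∃ y ∈ H, n • y = a) :
    ∃ K : AddSubgroup G, IsCompl H K := by
  obtain ⟨n, hn, hb⟩ := hbounded
  exact key_pure_bounded_summand n hn G H hb hpure
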